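/- arXiv:1101.4604 — 4 statements merged into one kernel-verified Lean document; each statement's English description precedes it below -/
import Mathlib

section
/- Let M be a finitely generated graded Cohen–Macaulay module over a polynomial ring S = k[x_1,...,x_m] over a field k, with a pure minimal free resolution of type (d_0, d_1, ..., d_c) where c = codim M, i.e., the i-th free module in the resolution is S(-d_i)^{β_i}. Then the multiplicity of M satisfies e(M) = (β_0 / c!) · ∏_{i=1}^{c} (d_i - d_0). -/
open Polynomial Finset

private lemma aux_deriv_lt (c : ℕ) (Q : Polynomial ℚ) (j : ℕ) (hj : j < c) :
    Polynomial.eval 1 (derivative^[j] ((X - Polynomial.C 1) ^ c * Q)) = 0 := by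
  have key : ∀ m, m < c →
      Polynomial.eval 1 ((derivative)^[m] ((X - Polynomial.C 1 : Polynomial ℚ) ^ c)) = 0 := by
    intro m hm
    rw [iterate_derivative_X_sub_pow]
    have h1 : c - m ≠ 0 := by omega
    simp [zero_pow h1]
  rw [iterate_derivative_mul, eval_finset_sum]
  apply Finset.sum_eq_zero
  intro k hk
  rw [eval_smul, eval_mul, key _ (by omega), zero_mul, smul_zero]

private lemma aux_deriv_eq (c : ℕ) (Q : Polynomial ℚ) :
    Polynomial.eval 1 (derivative^[c] ((X - Polynomial.C 1) ^ c * Q)) =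
      (c.factorial : ℚ) * Q.eval 1 := by
  rw [iterate_derivative_mul, eval_finset_sum]
  rw [Finset.sum_eq_single 0]
  · rw [eval_smul, eval_mul, Nat.sub_zero, iterate_derivative_X_sub_pow_self]
    simp
  · intro k hk hk0
    have hkc : k ≤ c := by simpa [Nat.lt_succ_iff] using hk
    have hck : c - (c - k) = k := by omega
    rw [eval_smul, eval_mul, iterate_derivative_X_sub_pow, hck]
    simp [zero_pow hk0]
  · simp

private lemma aux_span (c : ℕ) (L : Polynomial ℚ → ℚ)
    (hsub : ∀ p q, L (p - q) = L p - L q)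
    (hC : ∀ r p, L (Polynomial.C r * p) = r * L p)
    (h0 : L 0 = 0)
    (hdf : ∀ j, j < c → L (descPochhammer ℚ j) = 0) :
    ∀ n : ℕ, n ≤ c → ∀ p : Polynomial ℚ, p.degree < (n : ℕ) → L p = 0 := by
  intro n
  induction n with
  | zero =>
    intro _ p hp
    have hp0 : p = 0 := by
      rw [← Polynomial.degree_eq_bot]
      exact Nat.WithBot.lt_zero_iff.mp (by exact_mod_cast hp)
    rw [hp0]; exact h0
  | succ n ih =>
    intro hn p hp
    rcases eq_or_ne p 0 with rfl | hp0
    · exact h0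
    · have hk : p.natDegree ≤ n := by
        have := (Polynomial.natDegree_lt_iff_degree_lt hp0).mpr hp
        omega
      have hmon := monic_descPochhammer ℚ p.natDegree
      have hdfdeg : (descPochhammer ℚ p.natDegree).degree = (p.natDegree : ℕ) := by
        rw [Polynomial.degree_eq_natDegree hmon.ne_zero, descPochhammer_natDegree]
      have hdq : (p - Polynomial.C p.leadingCoeff * descPochhammer ℚ p.natDegree).degree
          < p.degree := by
        apply Polynomial.degree_sub_lt
        · rw [Polynomial.degree_C_mul (Polynomial.leadingCoeff_ne_zero.mpr hp0), hdfdeg,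
            Polynomial.degree_eq_natDegree hp0]
        · exact hp0
        · rw [Polynomial.leadingCoeff_mul, Polynomial.leadingCoeff_C, hmon.leadingCoeff, mul_one]
      have hq' : (p - Polynomial.C p.leadingCoeff * descPochhammer ℚ p.natDegree).degree
          < (n : ℕ) := by
        refine lt_of_lt_of_le hdq ?_
        rw [Polynomial.degree_eq_natDegree hp0]
        exact_mod_cast hk
      have hLq := ih (by omega) _ hq'
      have hLdf := hdf p.natDegree (by omega)
      have hsplit : L p = L (p - Polynomial.C p.leadingCoeff * descPochhammer ℚ p.natDegree)
          + p.leadingCoeff * L (descPochhammer ℚ p.natDegree) := by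
        rw [hsub, hC]; ring
      rw [hsplit, hLq, hLdf]; ring

/-- Huneke–Miller formula for modules: Let `M` be a graded Cohen–Macaulay module
with a pure resolution of type `(d_0, ..., d_c)`, `c = codim M`, with Betti numbers `β_i > 0`.
The numerical data of the resolution is encoded by the numerator of the Hilbert series of `M`,
`K(t) = Σ_i (-1)^i β_i t^{d_i - d_0}` (normalized by the shift `d_0`), which, since `M` is
Cohen–Macaulay of codimension `c`, is divisible by `(1-t)^c`; the multiplicity of `M` is the
value `e(M) = Q(1)` of the quotient `Q = K/(1-t)^c` at `t = 1`.  The theorem asserts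
`e(M) = (β_0 / c!) · ∏_{i=1}^c (d_i - d_0)`. -/
theorem stmt_3 (c : ℕ) (d : Fin (c + 1) → ℤ) (hd : StrictMono d)
    (β : Fin (c + 1) → ℕ) (hβ : ∀ i, 0 < β i)
    (Q : Polynomial ℚ)
    (hQ : (∑ i : Fin (c + 1), ((-1 : Polynomial ℚ) ^ (i : ℕ) * (β i : Polynomial ℚ) *
        Polynomial.X ^ (d i - d 0).toNat)) = (1 - Polynomial.X) ^ c * Q) :
    Q.eval 1 = (β 0 : ℚ) / (Nat.factorial c : ℚ) *
      ∏ i ∈ Finset.univ.filter (fun i => i ≠ 0), ((d i : ℚ) - (d 0 : ℚ)) := by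
  classical
  set a : Fin (c + 1) → ℕ := fun i => (d i - d 0).toNat with ha
  have hacast : ∀ i, ((a i : ℚ)) = (d i : ℚ) - (d 0 : ℚ) := by
    intro i
    have h1 : d 0 ≤ d i := hd.monotone (Fin.zero_le i)
    have h2 : ((a i : ℤ)) = d i - d 0 := by
      simp only [ha]
      exact Int.toNat_of_nonneg (by omega)
    have := congrArg (fun z : ℤ => (z : ℚ)) h2
    push_cast at this
    exact this
  have ha0 : a 0 = 0 := by simp [ha]
  set L : Polynomial ℚ → ℚ :=
    fun p => ∑ i : Fin (c + 1), (-1 : ℚ) ^ (i : ℕ) * (β i : ℚ) * p.eval ((a i : ℚ)) with hL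
  have hLsub : ∀ p q, L (p - q) = L p - L q := by
    intro p q; simp [hL, mul_sub, Finset.sum_sub_distrib]
  have hLC : ∀ r p, L (Polynomial.C r * p) = r * L p := by
    intro r p
    simp only [hL, eval_mul, eval_C, Finset.mul_sum]
    exact Finset.sum_congr rfl fun i _ => by ring
  have hL0 : L 0 = 0 := by simp [hL]
  -- derivative identity
  have hKder : ∀ j : ℕ, L (descPochhammer ℚ j) =
      Polynomial.eval 1 (derivative^[j] ((1 - X) ^ c * Q)) := by
    intro j
    rw [← hQ, iterate_derivative_sum, eval_finset_sum]
    simp only [hL]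
    apply Finset.sum_congr rfl
    intro i _
    have hterm : ((-1 : Polynomial ℚ) ^ (i : ℕ) * ((β i : ℕ) : Polynomial ℚ)
        * X ^ (d i - d 0).toNat)
        = Polynomial.C ((-1 : ℚ) ^ (i : ℕ) * (β i : ℚ)) * X ^ (a i) := by
      simp only [ha, map_mul, map_pow, map_neg, map_one, map_natCast]
    rw [hterm, iterate_derivative_C_mul, iterate_derivative_X_pow_eq_smul]
    rw [eval_mul, eval_C, eval_smul, eval_pow, eval_X, one_pow, smul_eq_mul, mul_one]
    rw [descPochhammer_eval_eq_descFactorial]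
  have hfacconv : ((1 : Polynomial ℚ) - X) ^ c * Q
      = ((-1 : ℚ) ^ c) • ((X - Polynomial.C 1) ^ c * Q) := by
    have e1 : ((1 : Polynomial ℚ) - X) = -(X - Polynomial.C 1) := by
      rw [Polynomial.C_1]; ring
    rw [e1, neg_pow, Polynomial.smul_eq_C_mul, map_pow, map_neg, map_one, mul_assoc]
  have hA0 : ∀ j, j < c → L (descPochhammer ℚ j) = 0 := by
    intro j hj
    rw [hKder j, hfacconv, iterate_derivative_smul, eval_smul, aux_deriv_lt c Q j hj, smul_zero]
  have hAc : L (descPochhammer ℚ c) = (-1 : ℚ) ^ c * (c.factorial : ℚ) * Q.eval 1 := by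
    rw [hKder c, hfacconv, iterate_derivative_smul, eval_smul, aux_deriv_eq c Q, smul_eq_mul]
    ring
  -- final polynomial
  set P : Polynomial ℚ := ∏ i ∈ Finset.univ.filter (fun i => i ≠ 0),
      (X - Polynomial.C ((a i : ℚ))) with hPdef
  have hPmon : P.Monic := monic_prod_of_monic _ _ fun i _ => monic_X_sub_C _
  have hcard : (Finset.univ.filter (fun i : Fin (c + 1) => i ≠ 0)).card = c := by
    rw [Finset.filter_ne']
    simp [Finset.card_erase_of_mem]
  have hPdeg : P.natDegree = c := by
    rw [hPdef, Polynomial.natDegree_prod _ _ (fun i _ => Polynomial.X_sub_C_ne_zero _),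
      Finset.sum_congr rfl (fun i _ => Polynomial.natDegree_X_sub_C ((a i : ℚ)))]
    simp [hcard]
  have hdiff : (P - descPochhammer ℚ c).degree < (c : ℕ) := by
    have hdegeq : P.degree = (descPochhammer ℚ c).degree := by
      rw [Polynomial.degree_eq_natDegree hPmon.ne_zero, hPdeg,
        Polynomial.degree_eq_natDegree (monic_descPochhammer ℚ c).ne_zero,
        descPochhammer_natDegree]
    have hlc : P.leadingCoeff = (descPochhammer ℚ c).leadingCoeff := by
      rw [hPmon.leadingCoeff, (monic_descPochhammer ℚ c).leadingCoeff]
    calc (P - descPochhammer ℚ c).degree < P.degree :=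
          Polynomial.degree_sub_lt hdegeq hPmon.ne_zero hlc
      _ = (c : ℕ) := by rw [Polynomial.degree_eq_natDegree hPmon.ne_zero, hPdeg]
  have hLP : L P = (-1 : ℚ) ^ c * (c.factorial : ℚ) * Q.eval 1 := by
    have h2 := aux_span c L hLsub hLC hL0 hA0 c le_rfl _ hdiff
    have h3 : L P = L (P - descPochhammer ℚ c) + L (descPochhammer ℚ c) := by
      rw [hLsub]; ring
    rw [h3, h2, hAc]; ring
  have hLP2 : L P = (β 0 : ℚ) * P.eval 0 := by
    simp only [hL]
    rw [Finset.sum_eq_single 0]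
    · simp [ha0]
    · intro i _ hi
      have hz : P.eval ((a i : ℚ)) = 0 := by
        rw [hPdef, eval_prod]
        apply Finset.prod_eq_zero (Finset.mem_filter.mpr ⟨Finset.mem_univ i, hi⟩)
        simp
      rw [hz, mul_zero]
    · simp
  have hP0 : P.eval 0 = (-1 : ℚ) ^ c *
      ∏ i ∈ Finset.univ.filter (fun i => i ≠ 0), ((d i : ℚ) - (d 0 : ℚ)) := by
    rw [hPdef, eval_prod]
    simp only [eval_sub, eval_X, eval_C, zero_sub]
    have : ∀ i ∈ Finset.univ.filter (fun i : Fin (c + 1) => i ≠ 0),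
        -((a i : ℚ)) = (-1) * ((d i : ℚ) - (d 0 : ℚ)) := by
      intro i _; rw [hacast i]; ring
    rw [Finset.prod_congr rfl this, Finset.prod_mul_distrib, Finset.prod_const, hcard]
  have hne : ((-1 : ℚ) ^ c) ≠ 0 := pow_ne_zero _ (by norm_num)
  have hfacne : (c.factorial : ℚ) ≠ 0 := Nat.cast_ne_zero.mpr c.factorial_pos.ne'
  have hfinal : (c.factorial : ℚ) * Q.eval 1 =
      (β 0 : ℚ) * ∏ i ∈ Finset.univ.filter (fun i => i ≠ 0), ((d i : ℚ) - (d 0 : ℚ)) := by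
    apply mul_left_cancel₀ hne
    have h6 : (β 0 : ℚ) * P.eval 0 = (-1 : ℚ) ^ c * (c.factorial : ℚ) * Q.eval 1 := by
      rw [← hLP2, hLP]
    rw [hP0] at h6
    linear_combination -h6
  field_simp
  linear_combination hfinal
end

section
/- Let F_• : 0 → F_c → ... → F_1 → F_0 be a pure free resolution of a Cohen–Macaulay module of type (d_0, ..., d_c) with ranks β_i. Then for each i, β_i = β_0 · ∏_{j≠i, j≥1} |d_j - d_0| / ∏_{j≠i, j≥1} |d_j - d_i| — that is, the Betti numbers of a pure resolution of a Cohen–Macaulay module are determined up to simultaneous scalar by the degree sequence via the Herzog–Kühl equations Σ_i (-1)^i d_i^k β_i = 0 for 0 ≤ k < c. -/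
open Polynomial Finset

/-- the Betti numbers of a pure resolution of a Cohen–Macaulay module of
codimension `c`, of type `d_0 < d_1 < ... < d_c`, satisfy the Herzog–Kühl equations
`Σ_i (-1)^i β_i d_i^k = 0` for `0 ≤ k < c`; these determine the `β_i` up to simultaneous
scalar: `β_i = β_0 · ∏_{j≠i, j≥1} |d_j - d_0| / ∏_{j≠i, j≥1} |d_j - d_i|`. -/
theorem stmt_4 (c : ℕ) (d : Fin (c + 1) → ℤ) (hd : StrictMono d)
    (β : Fin (c + 1) → ℚ) (hβ : ∀ i, 0 < β i)
    (hHK : ∀ k : ℕ, k < c → ∑ i : Fin (c + 1), (-1 : ℚ) ^ (i : ℕ) * β i * (d i : ℚ) ^ k = 0) :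
    ∀ i, β i = β 0 *
      (∏ j ∈ Finset.univ.filter (fun j => j ≠ i ∧ j ≠ 0), |(d j : ℚ) - (d 0 : ℚ)|) /
      (∏ j ∈ Finset.univ.filter (fun j => j ≠ i ∧ j ≠ 0), |(d j : ℚ) - (d i : ℚ)|) := by
  intro i
  have hinj : Function.Injective d := hd.injective
  set s : Finset (Fin (c+1)) := Finset.univ.filter (fun j => j ≠ i ∧ j ≠ 0) with hsdef
  have hmem : ∀ j, j ∈ s ↔ j ≠ i ∧ j ≠ 0 := by
    intro j; simp [hsdef]
  have hne : ∀ j ∈ s, (d j : ℚ) ≠ (d i : ℚ) := by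
    intro j hj h
    exact ((hmem j).1 hj).1 (hinj (by exact_mod_cast h))
  have hne0 : ∀ j ∈ s, (d j : ℚ) ≠ (d 0 : ℚ) := by
    intro j hj h
    exact ((hmem j).1 hj).2 (hinj (by exact_mod_cast h))
  have hprodpos : 0 < ∏ j ∈ s, |(d j : ℚ) - (d i : ℚ)| := by
    apply Finset.prod_pos
    intro j hj
    exact abs_pos.mpr (sub_ne_zero.mpr (hne j hj))
  by_cases hi0 : i = 0
  · subst hi0
    field_simp
  · -- main case
    have hc1 : 1 ≤ c := by
      by_contra h
      push_neg at h
      interval_cases c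
      exact hi0 (Fin.fin_one_eq_zero i)
    -- the polynomial
    set P : Polynomial ℚ := ∏ j ∈ s, (Polynomial.X - Polynomial.C (d j : ℚ)) with hPdef
    have hscard : s.card = c - 1 := by
      have : s = ({i, 0} : Finset (Fin (c+1)))ᶜ := by
        ext j; simp [hmem j, and_comm]
      rw [this, Finset.card_compl]
      have : ({i, 0} : Finset (Fin (c+1))).card = 2 := by
        rw [Finset.card_insert_of_notMem (by simp [hi0]), Finset.card_singleton]
      simp [this]
    have hPdeg : P.natDegree < c := by
      have : P.natDegree = s.card := by
        rw [hPdef]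
        rw [Polynomial.natDegree_prod]
        · simp only [Polynomial.natDegree_X_sub_C, Finset.sum_const, smul_eq_mul, mul_one]
        · intro j hj
          exact Polynomial.X_sub_C_ne_zero _
      rw [this, hscard]
      omega
    have hPeval : ∀ x : ℚ, P.eval x = ∏ j ∈ s, (x - (d j : ℚ)) := by
      intro x
      rw [hPdef]
      simp [Polynomial.eval_prod]
    -- sum with P plugged in is zero
    have hsum : ∑ m : Fin (c+1), (-1 : ℚ) ^ (m : ℕ) * β m * P.eval (d m : ℚ) = 0 := by
      have h1 : ∀ m : Fin (c+1), P.eval (d m : ℚ)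
          = ∑ k ∈ Finset.range c, P.coeff k * (d m : ℚ) ^ k := by
        intro m
        exact Polynomial.eval_eq_sum_range' hPdeg _
      calc ∑ m : Fin (c+1), (-1 : ℚ) ^ (m : ℕ) * β m * P.eval (d m : ℚ)
          = ∑ m : Fin (c+1), ∑ k ∈ Finset.range c,
              P.coeff k * ((-1 : ℚ) ^ (m : ℕ) * β m * (d m : ℚ) ^ k) := by
            apply Finset.sum_congr rfl
            intro m _
            rw [h1 m, Finset.mul_sum]
            apply Finset.sum_congr rfl
            intro k _
            ring
        _ = ∑ k ∈ Finset.range c, P.coeff k *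
              ∑ m : Fin (c+1), (-1 : ℚ) ^ (m : ℕ) * β m * (d m : ℚ) ^ k := by
            rw [Finset.sum_comm]
            apply Finset.sum_congr rfl
            intro k _
            rw [Finset.mul_sum]
        _ = 0 := by
            apply Finset.sum_eq_zero
            intro k hk
            rw [hHK k (Finset.mem_range.mp hk), mul_zero]
    -- collapse the sum to two terms
    have hzero : ∀ m ∈ s, (-1 : ℚ) ^ (m : ℕ) * β m * P.eval (d m : ℚ) = 0 := by
      intro m hm
      rw [hPeval]
      rw [Finset.prod_eq_zero hm (by ring), mul_zero]
    have hcollapse : β 0 * P.eval (d 0 : ℚ)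
        + (-1 : ℚ) ^ (i : ℕ) * β i * P.eval (d i : ℚ) = 0 := by
      have h2 : ∑ m ∈ ({0, i} : Finset (Fin (c+1))),
          (-1 : ℚ) ^ (m : ℕ) * β m * P.eval (d m : ℚ)
          = ∑ m : Fin (c+1), (-1 : ℚ) ^ (m : ℕ) * β m * P.eval (d m : ℚ) := by
        apply Finset.sum_subset (Finset.subset_univ _)
        intro m _ hm
        apply hzero
        rw [hmem]
        simp only [Finset.mem_insert, Finset.mem_singleton] at hm
        push_neg at hm
        exact ⟨hm.2, hm.1⟩
      rw [hsum] at h2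
      rw [Finset.sum_pair (Ne.symm hi0)] at h2
      simpa using h2
    -- take absolute values
    have habs : β i * ∏ j ∈ s, |(d j : ℚ) - (d i : ℚ)|
        = β 0 * ∏ j ∈ s, |(d j : ℚ) - (d 0 : ℚ)| := by
      have h3 : (-1 : ℚ) ^ (i : ℕ) * β i * P.eval (d i : ℚ)
          = -(β 0 * P.eval (d 0 : ℚ)) := by linarith [hcollapse]
      have h4 := congrArg abs h3
      rw [abs_mul, abs_mul, abs_neg, abs_mul, abs_pow, abs_neg, abs_one, one_pow,
        one_mul] at h4
      rw [abs_of_pos (hβ i), abs_of_pos (hβ 0)] at h4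
      rw [hPeval, hPeval, abs_prod, abs_prod] at h4
      calc β i * ∏ j ∈ s, |(d j : ℚ) - (d i : ℚ)|
          = β i * ∏ j ∈ s, |(d i : ℚ) - (d j : ℚ)| := by
            congr 1
            exact Finset.prod_congr rfl fun j _ => (abs_sub_comm _ _)
        _ = β 0 * ∏ j ∈ s, |(d 0 : ℚ) - (d j : ℚ)| := h4
        _ = β 0 * ∏ j ∈ s, |(d j : ℚ) - (d 0 : ℚ)| := by
            congr 1
            exact Finset.prod_congr rfl fun j _ => (abs_sub_comm _ _)
    rw [eq_div_iff (ne_of_gt hprodpos)]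
    exact habs
end

section
/- Let a = b_1 + ... + b_n, and set w_1 = 0, w_i = b_1 + ... + b_{i-1} for i ≥ 2. For an integer l ∈ [0, a], the line bundle O(w_1 - l, ..., w_n - l) on ℙ^{b_1-1} × ... × ℙ^{b_n-1} has nonzero cohomology (in some degree) if and only if l ∈ {w_1, w_2, ..., w_n, a}. -/
/-- with `a = b_1 + ... + b_n` and balanced weights `w_1 = 0`,
`w_i = b_1 + ... + b_{i-1}`, for `l ∈ [0,a]` the line bundle `O(w_1 - l, ..., w_n - l)` has
nonzero cohomology iff `l ∈ {w_1, ..., w_n, a}`; combinatorially: for all `i`,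
`w_i - l ∉ [-b_i+1, -1]` if and only if `l = w_i` for some `i`, or `l = a`. -/
theorem stmt_12 (n : ℕ) (hn : 1 ≤ n) (b : Fin n → ℕ) (hb : ∀ i, 1 ≤ b i)
    (a : ℕ) (ha : a = ∑ i, b i) (w : Fin n → ℤ)
    (hw : ∀ i, w i = ∑ j ∈ Finset.univ.filter (fun j => j < i), (b j : ℤ)) :
    ∀ l : ℤ, 0 ≤ l → l ≤ (a : ℤ) →
      ((∀ i, w i - l ∉ Finset.Icc (-(b i : ℤ) + 1) (-1)) ↔
        ((∃ i, l = w i) ∨ l = (a : ℤ))) := by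
  -- key sum identity: w i + b i = ∑_{k ≤ i} b k
  have hwb : ∀ i : Fin n, w i + (b i : ℤ)
      = ∑ k ∈ Finset.univ.filter (fun k => k ≤ i), (b k : ℤ) := by
    intro i
    have hins : Finset.univ.filter (fun k : Fin n => k ≤ i)
        = insert i (Finset.univ.filter (fun k => k < i)) := by
      ext k
      simp only [Finset.mem_filter, Finset.mem_insert, Finset.mem_univ, true_and,
        Fin.le_def, Fin.lt_def, Fin.ext_iff, and_true]
      omega
    rw [hins, Finset.sum_insert (by simp), hw]
    ring
  have hmono : ∀ j i : Fin n, j < i → w j + (b j : ℤ) ≤ w i := by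
    intro j i hji
    rw [hwb, hw]
    apply Finset.sum_le_sum_of_subset_of_nonneg
    · intro k hk
      simp only [Finset.mem_filter, Finset.mem_univ, true_and] at hk ⊢
      exact lt_of_le_of_lt hk hji
    · intro k _ _; positivity
  have hmono' : ∀ j i : Fin n, j ≤ i → w j ≤ w i := by
    intro j i hji
    rw [hw, hw]
    apply Finset.sum_le_sum_of_subset_of_nonneg
    · intro k hk
      simp only [Finset.mem_filter, Finset.mem_univ, true_and] at hk ⊢
      exact lt_of_lt_of_le hk hji
    · intro k _ _; positivity
  have hlea : ∀ j : Fin n, w j + (b j : ℤ) ≤ (a : ℤ) := by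
    intro j
    rw [hwb, ha]
    push_cast
    apply Finset.sum_le_sum_of_subset_of_nonneg (Finset.filter_subset _ _)
    intro k _ _; positivity
  intro l hl0 hla
  constructor
  · intro H
    by_contra hc
    push_neg at hc
    obtain ⟨hne, hna⟩ := hc
    set s := Finset.univ.filter (fun i : Fin n => w i ≤ l) with hs_def
    have hs : s.Nonempty := by
      refine ⟨⟨0, hn⟩, ?_⟩
      simp only [hs_def, Finset.mem_filter, Finset.mem_univ, true_and]
      have : w ⟨0, hn⟩ = 0 := by
        rw [hw]
        apply Finset.sum_eq_zero
        intro k hk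
        simp only [Finset.mem_filter] at hk
        exact absurd hk.2 (by simp [Fin.lt_def])
      omega
    set i := s.max' hs with hi_def
    have hi : w i ≤ l := (Finset.mem_filter.mp (s.max'_mem hs)).2
    have hlt : w i < l := lt_of_le_of_ne hi (fun h => hne i h.symm)
    have hub : l ≤ w i + (b i : ℤ) - 1 := by
      by_cases hcase : (i : ℕ) + 1 < n
      · set i' : Fin n := ⟨(i : ℕ) + 1, hcase⟩ with hi'_def
        have hwi' : w i' = w i + (b i : ℤ) := by
          rw [hw, hwb]
          apply Finset.sum_congr _ (fun _ _ => rfl)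
          ext k
          simp only [Finset.mem_filter, Finset.mem_univ, true_and, Fin.lt_def, Fin.le_def,
            hi'_def]
          omega
        have hnotin : i' ∉ s := by
          intro hmem
          have := Finset.le_max' s i' hmem
          rw [← hi_def] at this
          have : (i' : ℕ) ≤ (i : ℕ) := this
          simp [hi'_def] at this
        have : ¬ (w i' ≤ l) := by
          intro h
          exact hnotin (Finset.mem_filter.mpr ⟨Finset.mem_univ _, h⟩)
        omega
      · -- i is the last index, so w i + b i = a
        have htop : w i + (b i : ℤ) = (a : ℤ) := by
          rw [hwb, ha]
          push_cast
          apply Finset.sum_congr _ (fun _ _ => rfl)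
          ext k
          simp only [Finset.mem_filter, Finset.mem_univ, true_and, Fin.le_def, iff_true]
          have := k.isLt
          omega
        omega
    have := H i
    rw [Finset.mem_Icc] at this
    omega
  · rintro (⟨j, hj⟩ | hj) <;> intro i <;> rw [Finset.mem_Icc] <;> intro hmem
    · rcases lt_or_ge i j with h | h
      · have := hmono i j h
        omega
      · have := hmono' j i h
        omega
    · have h1 := hlea i
      have h2 := hb i
      omega
end

section
/- With a = Σ b_i and the balanced weights w as above, writing d = (d_0, ..., d_n) = (0, w_2, ..., w_n, a), the rank of the i-th term of the balanced tensor complex is β_i = C(a, d_i) · ∏_{j=1}^{i} C(d_i - d_j + b_j - 1, b_j - 1) · ∏_{j=i+1}^{n} C(d_{j-1} - d_i + b_j - 1, b_j - 1), where C denotes binomial coefficients; these ranks satisfy the Herzog–Kühl equations Σ_{i=0}^n (-1)^i β_i d_i^k = 0 for 0 ≤ k < n. -/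
open Finset Polynomial

lemma lagrange_sum_zero {F : Type*} [Field F] {ι : Type*} [Fintype ι] [DecidableEq ι]
    (v : ι → F) (hv : Function.Injective v) (k : ℕ) (hk : k + 1 < Fintype.card ι) :
    ∑ i, (v i) ^ k * (∏ j ∈ Finset.univ.erase i, (v i - v j))⁻¹ = 0 := by
  classical
  have hinj : Set.InjOn v (Finset.univ : Finset ι) := fun x _ y _ h => hv h
  have hcard : #(Finset.univ : Finset ι) = Fintype.card ι := Finset.card_univ
  have hdeg : (X ^ k : F[X]).degree < #(Finset.univ : Finset ι) := by
    rw [degree_X_pow, hcard]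
    exact_mod_cast lt_trans (Nat.lt_succ_self k) hk
  have hXk := Lagrange.eq_interpolate (f := (X ^ k : F[X])) hinj hdeg
  set N := Fintype.card ι - 1 with hN
  have hbasis : ∀ i : ι, (Lagrange.basis Finset.univ v i).coeff N =
      (∏ j ∈ Finset.univ.erase i, (v i - v j))⁻¹ := by
    intro i
    have hnd : (Lagrange.basis Finset.univ v i).natDegree = N := by
      rw [Lagrange.natDegree_basis hinj (mem_univ i), hcard]
    rw [← hnd, Polynomial.coeff_natDegree]
    rw [Lagrange.basis, Polynomial.leadingCoeff_prod, ← Finset.prod_inv_distrib]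
    refine Finset.prod_congr rfl fun j hj => ?_
    have hne : v i - v j ≠ 0 := by
      have : i ≠ j := (Finset.mem_erase.mp hj).1.symm
      exact sub_ne_zero_of_ne (fun h => this (hv h))
    rw [Lagrange.basisDivisor, leadingCoeff_mul, leadingCoeff_X_sub_C, leadingCoeff_C, mul_one]
  have hco := congrArg (fun p => Polynomial.coeff p N) hXk
  simp only [Lagrange.interpolate_apply, Polynomial.finset_sum_coeff, coeff_C_mul,
    coeff_X_pow, eval_pow, eval_X] at hco
  have hNk : N ≠ k := by omega
  rw [if_neg hNk] at hco
  calc ∑ i : ι, v i ^ k * (∏ j ∈ Finset.univ.erase i, (v i - v j))⁻¹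
      = ∑ i : ι, v i ^ k * (Lagrange.basis Finset.univ v i).coeff N :=
        Finset.sum_congr rfl fun i _ => by rw [hbasis i]
    _ = 0 := hco.symm

section TC
variable (c S : ℕ → ℕ) (hS : ∀ j, S (j + 1) = S j + c j) (hc : ∀ j, 1 ≤ c j)

include hS hc

lemma tc_mono : Monotone S := monotone_nat_of_le_succ (fun m => by rw [hS]; have := hc m; omega)

lemma tc_step : ∀ p q : ℕ, p < q → S p + c p ≤ S q := fun p q h => by
  have h2 := hS p
  have : S (p + 1) ≤ S q := tc_mono c S hS hc h
  omega

lemma tc_lower (i : ℕ) : ∀ m, m ≤ i →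
    (∏ j ∈ Finset.Ico (i - m) i, Nat.choose (S i - S j - 1) (c j - 1)) *
      ((∏ j ∈ Finset.Ico (i - m) i, (S i - S j)) *
        ∏ j ∈ Finset.Ico (i - m) i, (c j - 1).factorial) = (S i - S (i - m)).factorial := by
  intro m
  induction m with
  | zero => simp
  | succ m ih =>
    intro hm
    set l := i - (m + 1) with hl
    have hli : l < i := by omega
    have hl1 : l + 1 = i - m := by omega
    have hstep := tc_step c S hS hc l i hli
    have hcl := hc l
    rw [Finset.prod_eq_prod_Ico_succ_bot hli, Finset.prod_eq_prod_Ico_succ_bot hli,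
      Finset.prod_eq_prod_Ico_succ_bot hli, hl1]
    have ih' := ih (by omega)
    set P1 := ∏ j ∈ Finset.Ico (i - m) i, Nat.choose (S i - S j - 1) (c j - 1)
    set P2 := ∏ j ∈ Finset.Ico (i - m) i, (S i - S j)
    set P3 := ∏ j ∈ Finset.Ico (i - m) i, (c j - 1).factorial
    set N := S i - S l with hN
    set k := c l with hk
    have hkN : k ≤ N := by omega
    have hNm : S i - S (i - m) = N - k := by rw [← hl1, hS]; omega
    rw [hNm] at ih'
    have hch := Nat.choose_mul_factorial_mul_factorial (show k - 1 ≤ N - 1 by omega)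
    have hsub : N - 1 - (k - 1) = N - k := by omega
    rw [hsub] at hch
    calc Nat.choose (N - 1) (k - 1) * P1 * ((S i - S l) * P2 * ((k - 1).factorial * P3))
        = Nat.choose (N - 1) (k - 1) * (k - 1).factorial * (P1 * (P2 * P3)) * N := by
          rw [← hN]; ring
      _ = Nat.choose (N - 1) (k - 1) * (k - 1).factorial * (N - k).factorial * N := by rw [ih']
      _ = (N - 1).factorial * N := by rw [hch]
      _ = N.factorial := by rw [mul_comm, Nat.mul_factorial_pred (by omega)]

lemma tc_upper (i : ℕ) : ∀ m,
    (∏ j ∈ Finset.Ico i (i + m), Nat.choose (S (j + 1) - S i - 1) (c j - 1)) *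
      ((∏ j ∈ Finset.Ico i (i + m), (S (j + 1) - S i)) *
        ∏ j ∈ Finset.Ico i (i + m), (c j - 1).factorial) = (S (i + m) - S i).factorial := by
  intro m
  induction m with
  | zero => simp
  | succ m ih =>
    have hle : i ≤ i + m := by omega
    have hstep : S (i + m + 1) = S (i + m) + c (i + m) := hS _
    have hmono : S i ≤ S (i + m) := tc_mono c S hS hc hle
    have hcl := hc (i + m)
    rw [show i + (m + 1) = (i + m) + 1 from rfl, Finset.prod_Ico_succ_top hle,
      Finset.prod_Ico_succ_top hle, Finset.prod_Ico_succ_top hle]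
    set P1 := ∏ j ∈ Finset.Ico i (i + m), Nat.choose (S (j + 1) - S i - 1) (c j - 1)
    set P2 := ∏ j ∈ Finset.Ico i (i + m), (S (j + 1) - S i)
    set P3 := ∏ j ∈ Finset.Ico i (i + m), (c j - 1).factorial
    set N := S (i + m + 1) - S i with hN
    set k := c (i + m) with hk
    have hkN : k ≤ N := by omega
    have hNm : S (i + m) - S i = N - k := by omega
    rw [hNm] at ih
    have hch := Nat.choose_mul_factorial_mul_factorial (show k - 1 ≤ N - 1 by omega)
    have hsub : N - 1 - (k - 1) = N - k := by omega
    rw [hsub] at hch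
    have hN1 : S (i + m + 1) - S i - 1 = N - 1 := by omega
    rw [hN1]
    calc P1 * Nat.choose (N - 1) (k - 1) * (P2 * (S (i + m + 1) - S i) * (P3 * (k - 1).factorial))
        = Nat.choose (N - 1) (k - 1) * (k - 1).factorial * (P1 * (P2 * P3)) * N := by
          rw [← hN]; ring
      _ = Nat.choose (N - 1) (k - 1) * (k - 1).factorial * (N - k).factorial * N := by rw [ih]
      _ = (N - 1).factorial * N := by rw [hch]
      _ = N.factorial := by rw [mul_comm, Nat.mul_factorial_pred (by omega)]

lemma tc_main (hS0 : S 0 = 0) (n i : ℕ) (hi : i ≤ n) :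
    (Nat.choose (S n) (S i) *
      ∏ m ∈ Finset.range n, (if m < i then Nat.choose (S i - S m - 1) (c m - 1)
        else Nat.choose (S (m + 1) - S i - 1) (c m - 1))) *
      ((∏ m ∈ Finset.range i, (S i - S m)) * (∏ m ∈ Finset.Ico i n, (S (m + 1) - S i)) *
        ∏ m ∈ Finset.range n, (c m - 1).factorial) = (S n).factorial := by
  have hsplit : ∀ f : ℕ → ℕ, ∏ m ∈ Finset.range n, f m =
      (∏ m ∈ Finset.range i, f m) * ∏ m ∈ Finset.Ico i n, f m := by
    intro f
    rw [Finset.range_eq_Ico, Finset.range_eq_Ico]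
    exact (Finset.prod_Ico_consecutive f (Nat.zero_le i) hi).symm
  rw [hsplit, hsplit]
  have h1 : ∏ m ∈ Finset.range i, (if m < i then Nat.choose (S i - S m - 1) (c m - 1)
      else Nat.choose (S (m + 1) - S i - 1) (c m - 1)) =
      ∏ m ∈ Finset.range i, Nat.choose (S i - S m - 1) (c m - 1) :=
    Finset.prod_congr rfl fun m hm => if_pos (Finset.mem_range.mp hm)
  have h2 : ∏ m ∈ Finset.Ico i n, (if m < i then Nat.choose (S i - S m - 1) (c m - 1)
      else Nat.choose (S (m + 1) - S i - 1) (c m - 1)) =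
      ∏ m ∈ Finset.Ico i n, Nat.choose (S (m + 1) - S i - 1) (c m - 1) :=
    Finset.prod_congr rfl fun m hm => if_neg (by have := (Finset.mem_Ico.mp hm).1; omega)
  rw [h1, h2]
  have hlow := tc_lower c S hS hc i i le_rfl
  rw [Nat.sub_self, hS0, Nat.sub_zero] at hlow
  rw [← Finset.range_eq_Ico] at hlow
  have hup := tc_upper c S hS hc i (n - i)
  rw [show i + (n - i) = n by omega] at hup
  have hmono : S i ≤ S n := tc_mono c S hS hc hi
  calc (Nat.choose (S n) (S i) *
      ((∏ m ∈ Finset.range i, Nat.choose (S i - S m - 1) (c m - 1)) *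
        ∏ m ∈ Finset.Ico i n, Nat.choose (S (m + 1) - S i - 1) (c m - 1))) *
      ((∏ m ∈ Finset.range i, (S i - S m)) * (∏ m ∈ Finset.Ico i n, (S (m + 1) - S i)) *
        ((∏ m ∈ Finset.range i, (c m - 1).factorial) * ∏ m ∈ Finset.Ico i n, (c m - 1).factorial))
      = Nat.choose (S n) (S i) *
        (((∏ m ∈ Finset.range i, Nat.choose (S i - S m - 1) (c m - 1)) *
          ((∏ m ∈ Finset.range i, (S i - S m)) * ∏ m ∈ Finset.range i, (c m - 1).factorial)) *
        ((∏ m ∈ Finset.Ico i n, Nat.choose (S (m + 1) - S i - 1) (c m - 1)) *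
          ((∏ m ∈ Finset.Ico i n, (S (m + 1) - S i)) *
            ∏ m ∈ Finset.Ico i n, (c m - 1).factorial))) := by ring
    _ = Nat.choose (S n) (S i) * ((S i).factorial * (S n - S i).factorial) := by rw [hlow, hup]
    _ = (S n).factorial := by
        rw [← mul_assoc]
        exact Nat.choose_mul_factorial_mul_factorial hmono
end TC

section helpers
variable {M : Type*} [CommMonoid M]

lemma fin_prod_Iio {n : ℕ} (i : Fin (n + 1)) (f : ℕ → M) :
    ∏ j ∈ Finset.Iio i, f ↑j = ∏ m ∈ Finset.range ↑i, f m := by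
  rw [← Nat.Iio_eq_range, ← Fin.map_valEmbedding_Iio, Finset.prod_map]
  rfl

lemma fin_prod_Ioi {n : ℕ} (i : Fin (n + 1)) (f : ℕ → M) :
    ∏ j ∈ Finset.Ioi i, f ↑j = ∏ m ∈ Finset.Ico ((i : ℕ) + 1) (n + 1), f m := by
  have h : Finset.Ico ((i : ℕ) + 1) (n + 1) = Finset.Ioo (i : ℕ) (n + 1) := by
    ext m; simp [Finset.mem_Ico, Finset.mem_Ioc] <;> omega
  rw [h, ← Fin.map_valEmbedding_Ioi, Finset.prod_map]
  rfl

lemma prod_Ico_shift (f : ℕ → M) (i n : ℕ) :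
    ∏ m ∈ Finset.Ico (i + 1) (n + 1), f m = ∏ m ∈ Finset.Ico i n, f (m + 1) := by
  rw [Finset.prod_Ico_eq_prod_range, Finset.prod_Ico_eq_prod_range]
  have h : n + 1 - (i + 1) = n - i := by omega
  rw [h]
  exact Finset.prod_congr rfl fun x _ => by congr 1; omega

lemma fin_erase_split {n : ℕ} (i : Fin (n + 1)) :
    Finset.univ.erase i = Finset.Iio i ∪ Finset.Ioi i := by
  ext j
  simp only [Finset.mem_erase, Finset.mem_univ, and_true, Finset.mem_union, Finset.mem_Iio,
    Finset.mem_Ioi]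
  exact ⟨fun h => h.lt_or_gt, fun h => h.elim ne_of_lt ne_of_gt⟩

lemma fin_disj {n : ℕ} (i : Fin (n + 1)) :
    Disjoint (Finset.Iio i) (Finset.Ioi i) := by
  rw [Finset.disjoint_left]
  intro j hj hj'
  exact absurd (Finset.mem_Ioi.mp hj') (not_lt.mpr (le_of_lt (Finset.mem_Iio.mp hj)))

lemma fin_card_Ioi {n : ℕ} (i : Fin (n + 1)) : #(Finset.Ioi i) = n - ↑i := by
  rw [Fin.card_Ioi]
  omega
end helpers

/-- for the balanced tensor complex with `a = Σ b_j` and degree sequence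
`d_i = b_1 + ... + b_i`, the rank of the `i`-th term is
`β_i = C(a, d_i) · ∏_{j≤i} C(d_i - d_j + b_j - 1, b_j - 1) · ∏_{j>i} C(d_{j-1} - d_i + b_j - 1, b_j - 1)`,
and these ranks satisfy the Herzog–Kühl equations `Σ_i (-1)^i β_i d_i^k = 0` for `0 ≤ k < n`. -/
theorem stmt_13 (n : ℕ) (hn : 1 ≤ n) (b : Fin n → ℕ) (hb : ∀ j, 1 ≤ b j)
    (a : ℕ) (ha : a = ∑ j, b j)
    (d : Fin (n + 1) → ℕ)
    (hd : ∀ i, d i = ∑ j ∈ Finset.univ.filter (fun j : Fin n => (j : ℕ) < (i : ℕ)), b j)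
    (β : Fin (n + 1) → ℕ)
    (hβ : ∀ i, β i = Nat.choose a (d i) *
      ∏ j : Fin n, (if (j : ℕ) < (i : ℕ)
        then Nat.choose (d i - d j.succ + b j - 1) (b j - 1)
        else Nat.choose (d j.castSucc - d i + b j - 1) (b j - 1))) :
    ∀ k : ℕ, k < n →
      ∑ i : Fin (n + 1), (-1 : ℚ) ^ (i : ℕ) * (β i : ℚ) * (d i : ℚ) ^ k = 0 := by
  intro k hk
  classical
  set c : ℕ → ℕ := fun m => if h : m < n then b ⟨m, h⟩ else 1 with hcdef
  set S : ℕ → ℕ := fun m => ∑ j ∈ Finset.range m, c j with hSdef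
  have hS : ∀ j, S (j + 1) = S j + c j := fun j => Finset.sum_range_succ c j
  have hc : ∀ j, 1 ≤ c j := by
    intro j
    simp only [hcdef]
    split
    · exact hb _
    · exact le_rfl
  have hS0 : S 0 = 0 := by simp [hSdef]
  have hcb : ∀ j : Fin n, c ↑j = b j := by
    intro j
    simp only [hcdef, j.isLt, dif_pos, Fin.eta]
  have hSmono : StrictMono S := strictMono_nat_of_lt_succ (fun m => by
    have h1 := hc m; have h2 := hS m; omega)
  have hdS : ∀ i : Fin (n + 1), d i = S ↑i := by
    intro i
    have hin : (↑i : ℕ) ≤ n := Nat.lt_succ_iff.mp i.isLt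
    have h1 : S ↑i = ∑ m ∈ Finset.range n, (if m < (↑i : ℕ) then c m else 0) := by
      rw [show S ↑i = ∑ m ∈ Finset.range ↑i, c m from rfl]
      rw [← Finset.sum_subset (Finset.range_subset_range.mpr hin)
        (fun x _ hx => if_neg (by simpa using hx))]
      exact Finset.sum_congr rfl fun m hm => (if_pos (Finset.mem_range.mp hm)).symm
    rw [hd i, Finset.sum_filter, h1,
      ← Fin.sum_univ_eq_sum_range (fun m => if m < (↑i : ℕ) then c m else 0) n]
    exact Finset.sum_congr rfl fun j _ => by rw [hcb j]
  have han : a = S n := by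
    rw [ha, show S n = ∑ m ∈ Finset.range n, c m from rfl,
      ← Fin.sum_univ_eq_sum_range (fun m => c m) n]
    exact Finset.sum_congr rfl fun j _ => (hcb j).symm
  set v : Fin (n + 1) → ℚ := fun i => ((d i : ℕ) : ℚ) with hv
  have hvinj : Function.Injective v := by
    intro i j h
    have h2 : d i = d j := Nat.cast_injective h
    rw [hdS i, hdS j] at h2
    exact Fin.ext (hSmono.injective h2)
  set K : ℕ := ∏ m ∈ Finset.range n, (c m - 1).factorial with hKdef
  set P : Fin (n + 1) → ℕ := fun i =>
    (∏ m ∈ Finset.range ↑i, (S ↑i - S m)) * ∏ m ∈ Finset.Ico (↑i : ℕ) n, (S (m + 1) - S ↑i)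
    with hPdef
  -- the key combinatorial identity
  have hβP : ∀ i : Fin (n + 1), β i * (P i * K) = (S n).factorial := by
    intro i
    have hin : (↑i : ℕ) ≤ n := Nat.lt_succ_iff.mp i.isLt
    have hprod : (∏ j : Fin n, (if (j : ℕ) < (i : ℕ)
        then Nat.choose (d i - d j.succ + b j - 1) (b j - 1)
        else Nat.choose (d j.castSucc - d i + b j - 1) (b j - 1))) =
        ∏ m ∈ Finset.range n, (if m < (↑i : ℕ) then Nat.choose (S ↑i - S m - 1) (c m - 1)
          else Nat.choose (S (m + 1) - S ↑i - 1) (c m - 1)) := by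
      rw [← Fin.prod_univ_eq_prod_range (fun m => if m < (↑i : ℕ)
        then Nat.choose (S ↑i - S m - 1) (c m - 1)
        else Nat.choose (S (m + 1) - S ↑i - 1) (c m - 1)) n]
      refine Finset.prod_congr rfl fun j _ => ?_
      have hdsucc : d j.succ = S (↑j + 1) := by rw [hdS j.succ, Fin.val_succ]
      have hdcast : d j.castSucc = S ↑j := by rw [hdS j.castSucc, Fin.coe_castSucc]
      have hcbj := hcb j
      have hSj := hS (↑j : ℕ)
      by_cases hji : (↑j : ℕ) < (↑i : ℕ)
      · have hle : S (↑j + 1) ≤ S ↑i := hSmono.monotone (by omega)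
        have harg : d i - d j.succ + b j - 1 = S ↑i - S ↑j - 1 := by
          rw [hdS i, hdsucc]; omega
        rw [if_pos hji, if_pos hji, harg, ← hcbj]
      · have hle : S ↑i ≤ S ↑j := hSmono.monotone (by omega)
        have harg : d j.castSucc - d i + b j - 1 = S (↑j + 1) - S ↑i - 1 := by
          rw [hdS i, hdcast]; omega
        rw [if_neg hji, if_neg hji, harg, ← hcbj]
    rw [hβ i, hprod, hdS i, han]
    have hmain := tc_main c S hS hc hS0 n ↑i hin
    calc Nat.choose (S n) (S ↑i) *
        (∏ m ∈ Finset.range n, (if m < (↑i : ℕ) then Nat.choose (S ↑i - S m - 1) (c m - 1)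
          else Nat.choose (S (m + 1) - S ↑i - 1) (c m - 1))) * (P i * K)
        = (Nat.choose (S n) (S ↑i) *
        ∏ m ∈ Finset.range n, (if m < (↑i : ℕ) then Nat.choose (S ↑i - S m - 1) (c m - 1)
          else Nat.choose (S (m + 1) - S ↑i - 1) (c m - 1))) *
        ((∏ m ∈ Finset.range ↑i, (S ↑i - S m)) *
          (∏ m ∈ Finset.Ico (↑i : ℕ) n, (S (m + 1) - S ↑i)) * K) := by
          rw [hPdef]
      _ = (S n).factorial := hmain
  have hPpos : ∀ i : Fin (n + 1), 0 < P i := by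
    intro i
    refine Nat.mul_pos (Finset.prod_pos ?_) (Finset.prod_pos ?_)
    · intro m hm
      have hmi : m < (↑i : ℕ) := Finset.mem_range.mp hm
      have := hSmono hmi
      omega
    · intro m hm
      obtain ⟨h1, h2⟩ := Finset.mem_Ico.mp hm
      have := hSmono (show (↑i : ℕ) < m + 1 by omega)
      omega
  have hKpos : 0 < K := Finset.prod_pos fun m _ => Nat.factorial_pos _
  -- expressing the product over erased univ
  have hE : ∀ i : Fin (n + 1), ∏ j ∈ Finset.univ.erase i, (v i - v j) =
      (-1 : ℚ) ^ (n - (↑i : ℕ)) * (P i : ℚ) := by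
    intro i
    have hin : (↑i : ℕ) ≤ n := Nat.lt_succ_iff.mp i.isLt
    rw [fin_erase_split i, Finset.prod_union (fin_disj i)]
    have h1 : ∏ j ∈ Finset.Iio i, (v i - v j) =
        ((∏ m ∈ Finset.range ↑i, (S ↑i - S m) : ℕ) : ℚ) := by
      rw [Nat.cast_prod, ← fin_prod_Iio i (fun m => ((S ↑i - S m : ℕ) : ℚ))]
      refine Finset.prod_congr rfl fun j hj => ?_
      have hji0 : j < i := Finset.mem_Iio.mp hj
      have hji : (↑j : ℕ) < (↑i : ℕ) := hji0
      have hle : S ↑j ≤ S ↑i := hSmono.monotone (le_of_lt hji)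
      show (d i : ℚ) - (d j : ℚ) = _
      rw [hdS i, hdS j, Nat.cast_sub hle]
    have h2 : ∏ j ∈ Finset.Ioi i, (v i - v j) =
        (-1 : ℚ) ^ (n - (↑i : ℕ)) *
          ((∏ m ∈ Finset.Ico (↑i : ℕ) n, (S (m + 1) - S ↑i) : ℕ) : ℚ) := by
      have hstep1 : ∀ j ∈ Finset.Ioi i, v i - v j = -1 * ((S (↑j : ℕ) - S ↑i : ℕ) : ℚ) := by
        intro j hj
        have hij0 : i < j := Finset.mem_Ioi.mp hj
        have hij : (↑i : ℕ) < (↑j : ℕ) := hij0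
        have hle : S ↑i ≤ S ↑j := hSmono.monotone (le_of_lt hij)
        show (d i : ℚ) - (d j : ℚ) = _
        rw [hdS i, hdS j, Nat.cast_sub hle]
        ring
      rw [Finset.prod_congr rfl hstep1, Finset.prod_mul_distrib, Finset.prod_const,
        fin_card_Ioi i]
      congr 1
      rw [fin_prod_Ioi i (fun m => ((S m - S ↑i : ℕ) : ℚ)), prod_Ico_shift, Nat.cast_prod]
    rw [h1, h2, hPdef]
    push_cast
    ring
  -- the per-term identity over ℚ
  set C0 : ℚ := (-1 : ℚ) ^ n * ((S n).factorial : ℚ) / (K : ℚ) with hC0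
  have hterm : ∀ i : Fin (n + 1), (-1 : ℚ) ^ (↑i : ℕ) * (β i : ℚ) =
      C0 * (∏ j ∈ Finset.univ.erase i, (v i - v j))⁻¹ := by
    intro i
    have hin : (↑i : ℕ) ≤ n := Nat.lt_succ_iff.mp i.isLt
    have hPne : ((P i : ℕ) : ℚ) ≠ 0 := by exact_mod_cast (hPpos i).ne'
    have hKne : ((K : ℕ) : ℚ) ≠ 0 := by exact_mod_cast hKpos.ne'
    have hβQ : (β i : ℚ) * ((P i : ℚ) * (K : ℚ)) = ((S n).factorial : ℚ) := by
      exact_mod_cast congrArg (fun x : ℕ => (x : ℚ)) (hβP i)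
    have hsgn : (-1 : ℚ) ^ n = (-1 : ℚ) ^ (↑i : ℕ) * (-1 : ℚ) ^ (n - (↑i : ℕ)) := by
      rw [← pow_add]; congr 1; omega
    have hs2 : (-1 : ℚ) ^ (n - (↑i : ℕ)) * (-1 : ℚ) ^ (n - (↑i : ℕ)) = 1 := by
      rw [← mul_pow]; norm_num
    rw [hE i, hC0, hsgn, mul_inv]
    rw [inv_eq_one_div ((-1 : ℚ) ^ (n - (↑i : ℕ)))]
    field_simp
    linear_combination hβQ
  have hcard : k + 1 < Fintype.card (Fin (n + 1)) := by
    rw [Fintype.card_fin]; omega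
  have hlag := lagrange_sum_zero v hvinj k hcard
  calc ∑ i : Fin (n + 1), (-1 : ℚ) ^ (i : ℕ) * (β i : ℚ) * (v i) ^ k
      = ∑ i : Fin (n + 1), C0 * ((v i) ^ k *
          (∏ j ∈ Finset.univ.erase i, (v i - v j))⁻¹) := by
        refine Finset.sum_congr rfl fun i _ => ?_
        rw [hterm i]; ring
    _ = C0 * ∑ i : Fin (n + 1), (v i) ^ k *
          (∏ j ∈ Finset.univ.erase i, (v i - v j))⁻¹ := (Finset.mul_sum _ _ _).symm
    _ = 0 := by rw [hlag, mul_zero]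
end
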